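/- Let p be an odd prime, let a ≥ 1 be an integer, let b = ⌈a/3⌉, and let χ be a Dirichlet character modulo p^a. Then there exists an integer L, depending only on χ, p, a, b (independent of x), such that for every integer x, χ(1 + p^b x) = exp(2πi · L · (2 p^b x − p^{2b} x²) / p^a) (equivalently, χ(1 + p^b x) = exp(4πi L x / p^{a−b} − 2πi L x² / p^{a−2b}) when a ≥ 2b). -/

import Mathlib

private def postY (c e : ℤ) : ℕ → ℤ
  | 0 => 0
  | n+1 => postY c e n + e + c * postY c e n * e

/-- **Postnikov character formula, odd prime case.**
Let `p` be an odd prime, `a ≥ 1`, `b = ⌈a/3⌉`, and `χ` a Dirichlet character mod `p^a`.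
Then there is an integer `L` (independent of `x`) such that for all integers `x`,
`χ(1 + p^b x) = exp(2πi · L · (2 p^b x − p^{2b} x²) / p^a)`. -/
theorem stmt0 (p : ℕ) (hp : p.Prime) (hp2 : p ≠ 2) (a : ℕ) (ha : 1 ≤ a)
    (b : ℕ) (hb : (b : ℤ) = ⌈(a : ℚ) / 3⌉)
    (χ : DirichletCharacter ℂ (p ^ a)) :
    ∃ L : ℤ, ∀ x : ℤ,
      χ ((1 + (p : ℤ) ^ b * x : ℤ) : ZMod (p ^ a)) =
        Complex.exp (2 * (Real.pi : ℂ) * Complex.I * (L : ℂ) *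
          (2 * (p : ℂ) ^ b * (x : ℂ) - (p : ℂ) ^ (2 * b) * (x : ℂ) ^ 2) / (p : ℂ) ^ a) := by
  -- numerology: 1 ≤ b ≤ a ≤ 3b
  have h3b : a ≤ 3 * b := by
    have h := Int.le_ceil ((a:ℚ)/3)
    rw [← hb] at h
    push_cast at h
    have : (a:ℚ) ≤ 3*b := by linarith
    exact_mod_cast this
  have h3b' : 3 * b < a + 3 := by
    have h := Int.ceil_lt_add_one ((a:ℚ)/3)
    rw [← hb] at h
    push_cast at h
    have : (3*b:ℚ) < a + 3 := by linarith
    exact_mod_cast this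
  have hb1 : 1 ≤ b := by omega
  have hba : b ≤ a := by omega
  set q : ℕ := p ^ (a - b) with hqdef
  have hq0 : 0 < q := pow_pos hp.pos _
  haveI : NeZero q := ⟨hq0.ne'⟩
  set c : ℤ := (p:ℤ) ^ b with hcdef
  set ψ : ℤ → ℤ := fun x => 2*x - c * x^2 with hψ
  set f : ℤ → ℂ := fun x => χ (((1 + (p:ℤ) ^ b * x : ℤ) : ZMod (p ^ a))) with hf
  have hp' : Prime (p:ℤ) := Nat.prime_iff_prime_int.mp hp
  have hq' : (q:ℤ) = (p:ℤ) ^ (a-b) := by push_cast [hqdef]; ring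
  have hqc2 : (q:ℤ) ∣ c ^ 2 := by
    have h2 : c ^ 2 = (p:ℤ) ^ (2*b) := by rw [hcdef, ← pow_mul]; ring_nf
    rw [hq', h2]
    exact pow_dvd_pow _ (by omega)
  have hpaq : ((p:ℤ)) ^ a = c * q := by
    rw [hcdef, hq', ← pow_add]
    congr 1
    omega
  -- f multiplicative
  have hfmul : ∀ x y : ℤ, f x * f y = f (x + y + c * x * y) := by
    intro x y
    simp only [hf]
    rw [← map_mul]
    congr 1
    rw [← Int.cast_mul]
    congr 1
    rw [hcdef]; ring
  -- f periodic mod q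
  have hper : ∀ x y : ℤ, x ≡ y [ZMOD q] → f x = f y := by
    intro x y h
    simp only [hf]
    congr 1
    rw [ZMod.intCast_eq_intCast_iff]
    have hd : (((p:ℕ)^a : ℕ):ℤ) ∣ (1 + (p:ℤ)^b*y) - (1 + (p:ℤ)^b*x) := by
      have h' : (q:ℤ) ∣ y - x := h.dvd
      obtain ⟨t, ht⟩ := h'
      refine ⟨t, ?_⟩
      push_cast
      rw [hpaq, hcdef] at *
      rw [show (1 + (p:ℤ)^b*y) - (1 + (p:ℤ)^b*x) = (p:ℤ)^b * (y - x) by ring, ht]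
      ring
    exact Int.modEq_iff_dvd.mpr hd
  -- ψ is an "additive hom" w.r.t. the twisted operation
  have hψadd : ∀ x y : ℤ, ψ (x + y + c * x * y) ≡ ψ x + ψ y [ZMOD q] := by
    intro x y
    have hd : (q:ℤ) ∣ (ψ x + ψ y) - ψ (x + y + c * x * y) := by
      have : (ψ x + ψ y) - ψ (x + y + c * x * y)
          = c^2 * (2*x*y*(x+y) + c * x^2 * y^2) := by simp only [hψ]; ring
      rw [this]
      exact Dvd.dvd.mul_right hqc2 _
    exact Int.modEq_iff_dvd.mpr hd
  -- ψ is injective mod q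
  have hinj : ∀ x y : ℤ, ψ x ≡ ψ y [ZMOD q] → x ≡ y [ZMOD q] := by
    intro x y h
    have hd : (q:ℤ) ∣ (y - x) * (2 - c*(x+y)) := by
      have h' : (q:ℤ) ∣ ψ y - ψ x := h.dvd
      have : ψ y - ψ x = (y - x) * (2 - c*(x+y)) := by simp only [hψ]; ring
      rwa [this] at h'
    have hcop : IsCoprime ((q:ℤ)) (2 - c*(x+y)) := by
      rw [hq']
      apply IsCoprime.pow_left
      rw [hp'.coprime_iff_not_dvd]
      intro hdvd
      have hpc : (p:ℤ) ∣ c := by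
        rw [hcdef]
        exact dvd_pow_self _ (by omega)
      have hp2' : (p:ℤ) ∣ 2 := by
        have h2 := dvd_add hdvd (hpc.mul_right (x+y))
        simpa using h2
      have : (p:ℤ) ≤ 2 := Int.le_of_dvd (by norm_num) hp2'
      have hple : p ≤ 2 := by exact_mod_cast this
      have := hp.two_le
      omega
    have : (q:ℤ) ∣ (y - x) := hcop.dvd_of_dvd_mul_right hd
    exact Int.modEq_iff_dvd.mpr this
  -- ψ is surjective mod q : find e with ψ e ≡ 1 [ZMOD q]
  obtain ⟨e, hE⟩ : ∃ e : ℤ, ψ e ≡ 1 [ZMOD q] := by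
    set Ψ : ZMod q → ZMod q := fun z => 2*z - (c : ZMod q) * z^2 with hΨ
    have hΨψ : ∀ x : ℤ, ((ψ x : ℤ) : ZMod q) = Ψ ((x : ℤ) : ZMod q) := by
      intro x
      simp only [hψ, hΨ]
      push_cast
      ring
    have hΨinj : Function.Injective Ψ := by
      intro z w hzw
      obtain ⟨x, hx⟩ := ZMod.intCast_surjective (n := q) z
      obtain ⟨y, hy⟩ := ZMod.intCast_surjective (n := q) w
      rw [← hx, ← hy] at hzw ⊢
      rw [← hΨψ, ← hΨψ] at hzw
      rw [ZMod.intCast_eq_intCast_iff] at hzw ⊢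
      exact hinj x y hzw
    have hΨsurj : Function.Surjective Ψ := Finite.surjective_of_injective hΨinj
    obtain ⟨z, hz⟩ := hΨsurj 1
    obtain ⟨e, he⟩ := ZMod.intCast_surjective (n := q) z
    refine ⟨e, ?_⟩
    rw [← ZMod.intCast_eq_intCast_iff]
    rw [hΨψ, he, hz]
    norm_num
  -- the iterated products
  set Y : ℕ → ℤ := postY c e with hY
  have hfY : ∀ n : ℕ, f (Y n) = (f e) ^ n := by
    intro n
    induction n with
    | zero =>
      have h0 : Y 0 = 0 := rfl
      rw [h0, pow_zero]
      simp only [hf]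
      norm_num
    | succ n ih =>
      have : Y (n+1) = Y n + e + c * Y n * e := rfl
      rw [this, ← hfmul, ih, pow_succ]
  have hψY : ∀ n : ℕ, ψ (Y n) ≡ (n : ℤ) [ZMOD q] := by
    intro n
    induction n with
    | zero => simp [hY, postY, hψ]
    | succ n ih =>
      have h1 : Y (n+1) = Y n + e + c * Y n * e := rfl
      rw [h1]
      calc ψ (Y n + e + c * Y n * e) ≡ ψ (Y n) + ψ e [ZMOD q] := hψadd _ _
        _ ≡ (n : ℤ) + 1 [ZMOD q] := Int.ModEq.add ih hE
        _ = ((n+1 : ℕ) : ℤ) := by push_cast; ring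
  -- ζ := f e is a q-th root of unity
  set ζ : ℂ := f e with hζ
  have hζq : ζ ^ q = 1 := by
    rw [hζ, ← hfY q]
    have h1 : ψ (Y q) ≡ ψ 0 [ZMOD q] := by
      have h0 : ψ 0 = 0 := by simp [hψ]
      rw [h0]
      calc ψ (Y q) ≡ (q : ℤ) [ZMOD q] := hψY q
        _ ≡ 0 [ZMOD q] := Int.modEq_zero_iff_dvd.mpr dvd_rfl
    have h2 : Y q ≡ 0 [ZMOD q] := hinj _ _ h1
    rw [hper _ _ h2]
    simp only [hf]
    norm_num
  -- write ζ = exp(2πiL/q)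
  have hprim : IsPrimitiveRoot (Complex.exp (2 * Real.pi * Complex.I / q)) q :=
    Complex.isPrimitiveRoot_exp q hq0.ne'
  obtain ⟨L, hLlt, hL⟩ := hprim.eq_pow_of_pow_eq_one hζq
  refine ⟨(L : ℤ), ?_⟩
  intro x
  -- express f x as ζ ^ n with n ≡ ψ x [ZMOD q]
  set n : ℕ := (ψ x % q).toNat with hn
  have hn' : (n : ℤ) = ψ x % q := Int.toNat_of_nonneg (Int.emod_nonneg _ (by exact_mod_cast hq0.ne'))
  have hnmod : (n : ℤ) ≡ ψ x [ZMOD q] := by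
    rw [hn']
    exact Int.emod_emod_of_dvd _ dvd_rfl
  have hxY : x ≡ Y n [ZMOD q] := (hinj _ _ ((hψY n).trans hnmod)).symm
  have hfx : f x = ζ ^ n := by rw [hper _ _ hxY, hfY]
  -- now compute
  have hq0' : (q : ℂ) ≠ 0 := by exact_mod_cast hq0.ne'
  have hp0 : (p : ℂ) ≠ 0 := by exact_mod_cast hp.pos.ne'
  have hexp : ζ ^ n = Complex.exp (2 * Real.pi * Complex.I * L * n / q) := by
    rw [← hL, ← Complex.exp_nat_mul, ← Complex.exp_nat_mul]
    congr 1
    field_simp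
  -- target equality of exponentials
  have key : Complex.exp (2 * Real.pi * Complex.I * L * n / q)
      = Complex.exp (2 * (Real.pi : ℂ) * Complex.I * (L : ℂ) *
          (2 * (p : ℂ) ^ b * (x : ℂ) - (p : ℂ) ^ (2 * b) * (x : ℂ) ^ 2) / (p : ℂ) ^ a) := by
    rw [Complex.exp_eq_exp_iff_exists_int]
    obtain ⟨t, ht⟩ := hnmod.dvd  -- q ∣ ψ x - n
    refine ⟨-((L : ℤ) * t), ?_⟩
    have hψc : ((ψ x : ℤ) : ℂ) = 2*(x:ℂ) - (c:ℂ) * (x:ℂ)^2 := by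
      simp only [hψ]; push_cast; ring
    have hcc : (c : ℂ) = (p:ℂ) ^ b := by rw [hcdef]; push_cast; ring
    have hpa : ((p:ℂ)) ^ a = (c:ℂ) * (q:ℂ) := by exact_mod_cast congrArg (Int.cast : ℤ → ℂ) hpaq
    have hp2b : (p:ℂ) ^ (2*b) = (c:ℂ)^2 := by rw [hcc, ← pow_mul]; ring_nf
    have hc0 : (c:ℂ) ≠ 0 := by rw [hcc]; exact pow_ne_zero _ hp0
    have htc : ((ψ x : ℤ) : ℂ) = (n:ℂ) + (q:ℂ) * (t:ℂ) := by
      have := congrArg (Int.cast : ℤ → ℂ) ht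
      push_cast at this ⊢
      linear_combination this
    rw [hpa, hp2b]
    have hnum : 2 * (p : ℂ) ^ b * (x : ℂ) - (c:ℂ)^2 * (x : ℂ) ^ 2
        = (c:ℂ) * ((ψ x : ℤ) : ℂ) := by
      rw [hψc, hcc]; ring
    rw [hnum, htc]
    field_simp
    push_cast
    ring
  rw [show χ ((1 + (p : ℤ) ^ b * x : ℤ) : ZMod (p ^ a)) = f x from rfl, hfx, hexp, key]
  norm_cast
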